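/- Suppose F : ℝ × ℝ → ℝ is k-times continuously differentiable (k ≥ 1) and F(x,y) = g(x+y) - g(x) - g(y) for some function g : ℝ → ℝ. Then there exists a k-times continuously differentiable function f : ℝ → ℝ such that F(x,y) = f(x+y) - f(x) - f(y) for all real x, y. -/

import Mathlib

theorem smooth_inhomCauchy_representation (k : ℕ) (hk : 1 ≤ k)
    (F : ℝ × ℝ → ℝ) (g : ℝ → ℝ)
    (hF : ContDiff ℝ k F)
    (hFg : ∀ x y : ℝ, F (x, y) = g (x + y) - g x - g y) :
    ∃ f : ℝ → ℝ, ContDiff ℝ k f ∧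
      ∀ x y : ℝ, F (x, y) = f (x + y) - f x - f y := by
  obtain ⟨m, rfl⟩ : ∃ m, k = m + 1 := ⟨k - 1, (Nat.succ_pred_eq_of_pos hk).symm⟩
  set φ : ℝ → ℝ := fun t => fderiv ℝ F (t, 0) (0, 1) with hφdef
  have hFdiff : Differentiable ℝ F := hF.differentiable (by simp)
  have hφcd : ContDiff ℝ m φ := by
    have h1 : ContDiff ℝ m (fderiv ℝ F) :=
      hF.fderiv_right (by exact_mod_cast le_rfl)
    exact (h1.comp (contDiff_id.prodMk contDiff_const)).clm_apply contDiff_const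
  have hφcont : Continuous φ := hφcd.continuous
  -- derivative of z ↦ F (a, z) at 0 is φ a
  have hD : ∀ a : ℝ, HasDerivAt (fun z => F (a, z)) (φ a) 0 := by
    intro a
    have h1 : HasFDerivAt F (fderiv ℝ F (a, 0)) (a, 0) :=
      (hFdiff (a, 0)).hasFDerivAt
    have h2 : HasDerivAt (fun z : ℝ => ((a : ℝ), z)) ((0 : ℝ), (1 : ℝ)) 0 :=
      (hasDerivAt_const 0 a).prodMk (hasDerivAt_id 0)
    exact h1.comp_hasDerivAt 0 h2
  -- derivative of w ↦ F (x, w) at y is φ (x+y) - φ y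
  have hD2 : ∀ x y : ℝ, HasDerivAt (fun w => F (x, w)) (φ (x + y) - φ y) y := by
    intro x y
    have key : ∀ w : ℝ, F (x, w) = F (x + y, w - y) - F (y, w - y) + F (x, y) := by
      intro w
      rw [hFg, hFg, hFg, hFg]
      ring_nf
    have hsub : HasDerivAt (fun w : ℝ => w - y) 1 y := by
      simpa using (hasDerivAt_id y).sub_const y
    have hA : HasDerivAt (fun w : ℝ => F (x + y, w - y)) (φ (x + y)) y := by
      have h : HasDerivAt (fun z => F (x + y, z)) (φ (x + y)) (y - y) := by
        rw [sub_self]; exact hD (x + y)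
      exact h.comp_sub_const y y
    have hB : HasDerivAt (fun w : ℝ => F (y, w - y)) (φ y) y := by
      have h : HasDerivAt (fun z => F (y, z)) (φ y) (y - y) := by
        rw [sub_self]; exact hD y
      exact h.comp_sub_const y y
    have : HasDerivAt (fun w : ℝ => F (x + y, w - y) - F (y, w - y) + F (x, y))
        (φ (x + y) - φ y) y := (hA.sub hB).add_const _
    exact this.congr_of_eventuallyEq (Filter.Eventually.of_forall key)
  -- define f
  set f : ℝ → ℝ := fun x => (∫ t in (0 : ℝ)..x, φ t) + g 0 with hfdef
  have hfderiv : ∀ x : ℝ, HasDerivAt f (φ x) x := by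
    intro x
    have : HasDerivAt (fun u => ∫ t in (0 : ℝ)..u, φ t) (φ x) x :=
      (hφcont.integral_hasStrictDerivAt 0 x).hasDerivAt
    simpa [hfdef] using this.add_const (g 0)
  have hfcd : ContDiff ℝ (m + 1 : ℕ) f := by
    suffices h : ContDiff ℝ ((m : ℕ∞) + 1) f by exact_mod_cast h
    rw [contDiff_succ_iff_deriv]
    refine ⟨fun x => (hfderiv x).differentiableAt, fun h => by simp at h, ?_⟩
    have : deriv f = φ := funext fun x => (hfderiv x).deriv
    rw [this]
    exact_mod_cast hφcd
  refine ⟨f, hfcd, fun x y => ?_⟩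
  -- FTC: F(x,y) - F(x,0) = ∫₀ʸ (φ(x+t) - φ t) dt
  have hint : ∫ t in (0 : ℝ)..y, (φ (x + t) - φ t) = F (x, y) - F (x, 0) := by
    apply intervalIntegral.integral_eq_sub_of_hasDerivAt
    · intro t _
      exact hD2 x t
    · exact ((hφcont.comp (continuous_const.add continuous_id)).sub
        hφcont).intervalIntegrable 0 y
  have hsplit : ∫ t in (0 : ℝ)..y, (φ (x + t) - φ t)
      = (∫ t in (0 : ℝ)..y, φ (x + t)) - ∫ t in (0 : ℝ)..y, φ t := by
    apply intervalIntegral.integral_sub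
    · exact (hφcont.comp (continuous_const.add continuous_id)).intervalIntegrable 0 y
    · exact hφcont.intervalIntegrable 0 y
  have hshift : (∫ t in (0 : ℝ)..y, φ (x + t)) = ∫ t in x..(x + y), φ t := by
    simpa using intervalIntegral.integral_comp_add_left (a := 0) (b := y) φ x
  have hadj : (∫ t in (0 : ℝ)..x, φ t) + ∫ t in x..(x + y), φ t
      = ∫ t in (0 : ℝ)..(x + y), φ t :=
    intervalIntegral.integral_add_adjacent_intervals
      (hφcont.intervalIntegrable 0 x) (hφcont.intervalIntegrable x (x + y))
  have hF0 : F (x, 0) = -g 0 := by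
    have := hFg x 0
    simpa using this
  have : F (x, y) = (∫ t in x..(x + y), φ t) - (∫ t in (0 : ℝ)..y, φ t) - g 0 := by
    rw [← hshift, ← hsplit, hint, hF0]; ring
  rw [this, hfdef]
  simp only []
  have hx : (∫ t in x..(x + y), φ t) = (∫ t in (0 : ℝ)..(x + y), φ t)
      - ∫ t in (0 : ℝ)..x, φ t := by linarith [hadj]
  rw [hx]; ring
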